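/- For every natural number k, the following identity holds in ℚ: (1/8)_k · (7/8)_k · (3/8)_k · (5/8)_k / (k!)⁴ = (1/(8^{4k}·2^{4k})) · (8k)!/((k!)⁴·(4k)!), where (a)_k = a(a+1)(a+2)⋯(a+k−1) denotes the ascending Pochhammer symbol. -/

import Mathlib

lemma aux_P41111 (k : ℕ) :
    (ascPochhammer ℚ k).eval (1/8) * (ascPochhammer ℚ k).eval (7/8) *
      (ascPochhammer ℚ k).eval (3/8) * (ascPochhammer ℚ k).eval (5/8) *
      ((8:ℚ) ^ (4*k) * 2 ^ (4*k)) * (Nat.factorial (4*k) : ℚ)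
      = (Nat.factorial (8*k) : ℚ) := by
  induction k with
  | zero => simp [Nat.factorial]
  | succ n ih =>
    have h4 : 4 * (n+1) = 4*n + 4 := by ring
    have h8 : 8 * (n+1) = 8*n + 8 := by ring
    rw [h4, h8]
    simp only [ascPochhammer_succ_eval, pow_succ, pow_add,
      show 4*n+4 = (((4*n+1)+1)+1)+1 by ring,
      show 8*n+8 = (((((((8*n+1)+1)+1)+1)+1)+1)+1)+1 by ring,
      Nat.factorial_succ]
    push_cast
    linear_combination ((1/8+n)*(7/8+n)*(3/8+n)*(5/8+n)*8^4*2^4*(4*n+1)*(4*n+2)*(4*n+3)*(4*n+4)) * ih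

/-- `(1/8)_k (7/8)_k (3/8)_k (5/8)_k / (k!)⁴ = (1/(8^{4k}·2^{4k})) · (8k)!/((k!)⁴(4k)!)` in `ℚ`,
where `(a)_k` is the ascending Pochhammer symbol. -/
theorem pochhammer_P41111 (k : ℕ) :
    (ascPochhammer ℚ k).eval (1/8) * (ascPochhammer ℚ k).eval (7/8) *
        (ascPochhammer ℚ k).eval (3/8) * (ascPochhammer ℚ k).eval (5/8) /
        ((Nat.factorial k : ℚ)) ^ 4 =
      (1 / (8 ^ (4 * k) * 2 ^ (4 * k))) *
        ((Nat.factorial (8 * k) : ℚ) /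
          (((Nat.factorial k : ℚ)) ^ 4 * (Nat.factorial (4 * k) : ℚ))) := by
  have h := aux_P41111 k
  have hk : ((Nat.factorial k : ℚ)) ≠ 0 := Nat.cast_ne_zero.mpr (Nat.factorial_ne_zero k)
  have h4 : ((Nat.factorial (4*k) : ℚ)) ≠ 0 := Nat.cast_ne_zero.mpr (Nat.factorial_ne_zero _)
  have h8 : (8:ℚ) ^ (4*k) ≠ 0 := by positivity
  have h2 : (2:ℚ) ^ (4*k) ≠ 0 := by positivity
  field_simp
  linear_combination h
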